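/- Let X = (X_t)_{t∈[0,1]} be a real-valued stochastic process with almost surely continuous paths on a probability space (Ω, F, P) that satisfies the small ball estimate (S) with constants λ, μ, K₁, K₂ > 0, and suppose that for some θ > 0, almost surely the path t ↦ X_t is Hölder continuous of order θ on [0,1]. Then θ ≤ μ/λ. -/

import Mathlib

open MeasureTheory Set

/-- A process `X = (X_t)_{t ∈ [0,1]}` satisfies the small ball estimate (S) with constants
`lam, mu, K₁, K₂ > 0` if for all `ε > 0`, `Δ ∈ (0,1]` and `s ∈ [0, 1-Δ]`,
`P(sup_{s ≤ t ≤ s+Δ} |X_t - X_s| ≤ K₁ ε) ≤ exp(-K₂ ε^{-λ} Δ^{μ})`. -/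
def SmallBallEstimate {Ω : Type*} [MeasurableSpace Ω] (P : Measure Ω)
    (X : ℝ → Ω → ℝ) (lam mu K₁ K₂ : ℝ) : Prop :=
  ∀ ε > (0 : ℝ), ∀ Δ ∈ Set.Ioc (0 : ℝ) 1, ∀ s ∈ Set.Icc (0 : ℝ) (1 - Δ),
    P {ω | ∀ t ∈ Set.Icc s (s + Δ), |X t ω - X s ω| ≤ K₁ * ε}
      ≤ ENNReal.ofReal (Real.exp (-K₂ * ε ^ (-lam) * Δ ^ mu))

/-- If a process with a.s. continuous paths satisfies the small ball estimate (S) with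
constants `λ, μ, K₁, K₂ > 0` and has a.s. Hölder continuous paths of order `θ > 0`
on `[0,1]`, then `θ ≤ μ/λ`. -/
theorem holder_exponent_le_of_smallBall {Ω : Type*} [MeasurableSpace Ω]
    (P : Measure Ω) [IsProbabilityMeasure P] (X : ℝ → Ω → ℝ)
    (lam mu K₁ K₂ θ : ℝ)
    (hlam : 0 < lam) (hmu : 0 < mu) (hK₁ : 0 < K₁) (hK₂ : 0 < K₂) (hθ : 0 < θ)
    (hcont : ∀ᵐ ω ∂P, ContinuousOn (fun t => X t ω) (Set.Icc 0 1))
    (hS : SmallBallEstimate P X lam mu K₁ K₂)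
    (hHolder : ∀ᵐ ω ∂P, ∃ C : ℝ, ∀ s ∈ Set.Icc (0 : ℝ) 1, ∀ t ∈ Set.Icc (0 : ℝ) 1,
      |X t ω - X s ω| ≤ C * |t - s| ^ θ) :
    θ ≤ mu / lam := by
  by_contra hcon
  push_neg at hcon
  have hβ : mu - θ * lam < 0 := by
    have := (div_lt_iff₀ hlam).mp hcon
    linarith
  -- Sets of uniformly Hölder paths with constant n+1
  set A : ℕ → Set Ω := fun n =>
    {ω | ∀ s ∈ Set.Icc (0 : ℝ) 1, ∀ t ∈ Set.Icc (0 : ℝ) 1,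
      |X t ω - X s ω| ≤ ((n : ℝ) + 1) * |t - s| ^ θ} with hA
  have hsub : ∀ᵐ ω ∂P, ω ∈ ⋃ n, A n := by
    filter_upwards [hHolder] with ω ⟨C, hC⟩
    refine Set.mem_iUnion.2 ⟨⌈C⌉₊, fun s hs t ht => ?_⟩
    refine (hC s hs t ht).trans ?_
    have h1 : C ≤ (⌈C⌉₊ : ℝ) + 1 := (Nat.le_ceil C).trans (by linarith)
    exact mul_le_mul_of_nonneg_right h1 (Real.rpow_nonneg (abs_nonneg _) _)
  -- Some A n has positive measure
  have hUnion : P (⋃ n, A n) ≠ 0 := by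
    intro h0
    have h1 : P (Set.univ : Set Ω) ≤ P (⋃ n, A n) + P (⋃ n, A n)ᶜ := by
      refine le_trans (measure_mono ?_) (measure_union_le _ _)
      intro x _; by_cases hx : x ∈ ⋃ n, A n
      · exact Set.mem_union_left _ hx
      · exact Set.mem_union_right _ hx
    rw [h0, zero_add] at h1
    have h2 : P (⋃ n, A n)ᶜ = 0 := hsub
    rw [h2] at h1
    simp [measure_univ] at h1
  obtain ⟨n, hn⟩ : ∃ n, P (A n) ≠ 0 := by
    by_contra hall
    push_neg at hall
    exact hUnion (le_antisymm ((measure_iUnion_le A).trans (by simp [hall])) (zero_le ..))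
  set Cn : ℝ := (n : ℝ) + 1 with hCn
  have hCn0 : 0 < Cn := by positivity
  set c : ℝ := (P (A n)).toReal with hc
  have hcfin : P (A n) ≠ ⊤ := measure_ne_top P _
  have hc0 : 0 < c := ENNReal.toReal_pos hn hcfin
  have hc1 : c ≤ 1 := by
    rw [hc]
    simpa using ENNReal.toReal_mono ENNReal.one_ne_top prob_le_one
  set a : ℝ := K₂ * (Cn / K₁) ^ (-lam) with ha
  have ha0 : 0 < a := by
    apply mul_pos hK₂
    exact Real.rpow_pos_of_pos (by positivity) _
  -- Key estimate for every Δ ∈ (0,1]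
  have key : ∀ Δ ∈ Set.Ioc (0 : ℝ) 1, a * Δ ^ (mu - θ * lam) ≤ -Real.log c := by
    rintro Δ ⟨hΔ0, hΔ1⟩
    set ε : ℝ := Cn * Δ ^ θ / K₁ with hε
    have hε0 : 0 < ε := by
      apply div_pos (mul_pos hCn0 (Real.rpow_pos_of_pos hΔ0 θ)) hK₁
    have hAs : A n ⊆ {ω | ∀ t ∈ Set.Icc (0 : ℝ) (0 + Δ), |X t ω - X 0 ω| ≤ K₁ * ε} := by
      intro ω hω t ht
      rw [zero_add] at ht
      have ht1 : t ∈ Set.Icc (0 : ℝ) 1 := ⟨ht.1, ht.2.trans hΔ1⟩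
      refine (hω 0 (by constructor <;> norm_num) t ht1).trans ?_
      have h1 : |t - 0| ^ θ ≤ Δ ^ θ := by
        rw [sub_zero, abs_of_nonneg ht.1]
        exact Real.rpow_le_rpow ht.1 ht.2 hθ.le
      have h2 : Cn * |t - 0| ^ θ ≤ Cn * Δ ^ θ := by
        exact mul_le_mul_of_nonneg_left h1 hCn0.le
      refine h2.trans (le_of_eq ?_)
      rw [hε]
      field_simp
    have hbound := hS ε hε0 Δ ⟨hΔ0, hΔ1⟩ 0 ⟨le_refl 0, by linarith⟩
    have hPA : P (A n) ≤ ENNReal.ofReal (Real.exp (-K₂ * ε ^ (-lam) * Δ ^ mu)) :=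
      (measure_mono hAs).trans hbound
    have hcle : c ≤ Real.exp (-K₂ * ε ^ (-lam) * Δ ^ mu) :=
      ENNReal.toReal_le_of_le_ofReal (Real.exp_nonneg _) hPA
    have hlog : Real.log c ≤ -K₂ * ε ^ (-lam) * Δ ^ mu := by
      calc Real.log c ≤ Real.log (Real.exp (-K₂ * ε ^ (-lam) * Δ ^ mu)) :=
            Real.log_le_log hc0 hcle
        _ = _ := Real.log_exp _
    have hexp : K₂ * ε ^ (-lam) * Δ ^ mu = a * Δ ^ (mu - θ * lam) := by
      rw [hε, ha]
      have h1 : Cn * Δ ^ θ / K₁ = (Cn / K₁) * Δ ^ θ := by ring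
      rw [h1, Real.mul_rpow (by positivity) (by positivity), ← Real.rpow_mul hΔ0.le,
        mul_assoc K₂, mul_assoc, ← Real.rpow_add hΔ0, ← mul_assoc]
      ring_nf
    nlinarith [hlog, hexp]
  -- Choose Δ small enough to get a contradiction
  set L : ℝ := -Real.log c with hL
  have hL0 : 0 ≤ L := by
    rw [hL]
    simp only [neg_nonneg]
    exact Real.log_nonpos hc0.le hc1
  set Δ : ℝ := min 1 (((L + 1) / a) ^ (mu - θ * lam)⁻¹) with hΔ
  have hΔ₀pos : 0 < ((L + 1) / a) ^ (mu - θ * lam)⁻¹ :=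
    Real.rpow_pos_of_pos (by positivity) _
  have hΔpos : 0 < Δ := lt_min one_pos hΔ₀pos
  have hΔle : Δ ≤ 1 := min_le_left _ _
  have hkey := key Δ ⟨hΔpos, hΔle⟩
  have hgrow : (L + 1) / a ≤ Δ ^ (mu - θ * lam) := by
    have h1 : Δ ≤ ((L + 1) / a) ^ (mu - θ * lam)⁻¹ := min_le_right _ _
    calc (L + 1) / a = (((L + 1) / a) ^ (mu - θ * lam)⁻¹) ^ (mu - θ * lam) :=
          (Real.rpow_inv_rpow (by positivity) hβ.ne).symm
      _ ≤ Δ ^ (mu - θ * lam) := Real.rpow_le_rpow_of_nonpos hΔpos h1 hβ.le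
  have : L + 1 ≤ a * Δ ^ (mu - θ * lam) := by
    rw [div_le_iff₀ ha0] at hgrow
    linarith [hgrow]
  linarith [hkey, this]
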